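/- arXiv:2308.02020 — 3 statements merged into one kernel-verified Lean document; each statement's English description precedes it below -/
import Mathlib

section
/- Let X be a real vector space, T a finite nonempty index set, f : X → ℝ upper semicontinuous on line segments, and for each t ∈ T let h(t,·) : X → ℝ be convex and lower semicontinuous on line segments. Assume there exists x̃ ∈ X with h(t, x̃) < 0 for all t ∈ T, and assume inf{f(x) | h(t,x) ≥ 0 ∀ t ∈ T} > -∞. Then inf{f(x) | h(t,x) > 0 ∀ t ∈ T} = inf{f(x) | h(t,x) ≥ 0 ∀ t ∈ T}. -/
open Topology Filter


theorem stmt1 {X : Type*} [AddCommGroup X] [Module ℝ X]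
    {T : Type*} [Fintype T] [Nonempty T]
    (f : X → ℝ)
    (hf : ∀ a b : X, UpperSemicontinuous (fun s : ℝ => f (a + s • (b - a))))
    (h : T → X → ℝ)
    (hconv : ∀ t, ConvexOn ℝ Set.univ (h t))
    (hlsc : ∀ t, ∀ a b : X, LowerSemicontinuous (fun s : ℝ => h t (a + s • (b - a))))
    (hslater : ∃ xt : X, ∀ t, h t xt < 0)
    (hbd : ⊥ < sInf ((fun x => (f x : EReal)) '' {x | ∀ t, 0 ≤ h t x})) :
    sInf ((fun x => (f x : EReal)) '' {x | ∀ t, 0 < h t x})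
      = sInf ((fun x => (f x : EReal)) '' {x | ∀ t, 0 ≤ h t x}) := by
  obtain ⟨xt, hxt⟩ := hslater
  apply le_antisymm
  · apply le_sInf
    rintro c ⟨x, hx, rfl⟩
    by_contra hlt
    push_neg at hlt
    obtain ⟨c, hc1, hc2⟩ := EReal.exists_between_coe_real hlt
    have hc1' : f x < c := by exact_mod_cast hc1
    have husc : ∀ᶠ s in 𝓝 (0:ℝ), f (x + s • (xt - x)) < c := by
      have := hf x xt 0 c (by simpa using hc1')
      simpa using this
    have hfreq : ∀ᶠ s in 𝓝[<] (0:ℝ), f (x + s • (xt - x)) < c :=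
      husc.filter_mono nhdsWithin_le_nhds
    obtain ⟨s, hs1, hs2⟩ := (hfreq.and self_mem_nhdsWithin).exists
    have hs : s < 0 := hs2
    set y := x + s • (xt - x) with hy
    have h1s : (0:ℝ) < 1 - s := by linarith
    have hcomb : (1 / (1 - s)) • y + (-s / (1 - s)) • xt = x := by
      rw [hy]
      match_scalars <;> field_simp <;> ring
    have hyfeas : ∀ t, 0 < h t y := by
      intro t
      have hdiv : (0:ℝ) < 1 / (1 - s) := one_div_pos.mpr h1s
      have hdiv2 : (0:ℝ) < -s / (1 - s) := div_pos (by linarith) h1s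
      have hcv := (hconv t).2 (Set.mem_univ y) (Set.mem_univ xt)
        hdiv.le hdiv2.le (by field_simp; ring)
      rw [hcomb] at hcv
      simp only [smul_eq_mul] at hcv
      have hx' := hx t
      have hneg : (-s / (1 - s)) * h t xt < 0 :=
        mul_neg_of_pos_of_neg hdiv2 (hxt t)
      by_contra hny
      push_neg at hny
      have : (1 / (1 - s)) * h t y ≤ 0 :=
        mul_nonpos_of_nonneg_of_nonpos hdiv.le hny
      linarith
    have : sInf ((fun x => (f x : EReal)) '' {x | ∀ t, 0 < h t x}) ≤ (f y : EReal) :=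
      sInf_le ⟨y, hyfeas, rfl⟩
    have : sInf ((fun x => (f x : EReal)) '' {x | ∀ t, 0 < h t x}) < (c : EReal) :=
      lt_of_le_of_lt this (by exact_mod_cast hs1)
    exact absurd hc2 (not_lt_of_gt this)
  · exact sInf_le_sInf (Set.image_mono (fun x hx t => (hx t).le))
end

section
/- Let f : ℝ^n → ℝ ∪ {∞} be proper, lower semicontinuous, convex, and let T : ℝ^n → ℝ^d be linear, D ⊆ ℝ^d closed convex with int D ≠ ∅. Suppose x̃ minimizes f over ℝ^n, T x̃ ∈ int D, f is upper semicontinuous on line segments (e.g. f real-valued continuous), the constraint {x | Tx ∉ int D} is nonempty, and inf{f(x) | Tx ∉ int D} > −∞. With E := (D − Tx̃)° and h(x) := max_{u∈E} ⟨u, Tx − Tx̃⟩ − 1, we have inf{f(x) | Tx ∉ int D} = inf{f(x) | h(x) ≥ 0} = inf{f(x) | h(x) > 0}. -/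
open Set

private lemma csSup_const_mul_image {S : Set ℝ} (hne : S.Nonempty) (hbd : BddAbove S)
    {c : ℝ} (hc : 0 < c) : sSup ((fun r => c * r) '' S) = c * sSup S := by
  obtain ⟨B, hB⟩ := hbd
  have hbd' : BddAbove ((fun r => c * r) '' S) := by
    refine ⟨c * B, ?_⟩
    rintro y ⟨s, hs, rfl⟩
    exact mul_le_mul_of_nonneg_left (hB hs) hc.le
  apply le_antisymm
  · refine csSup_le (hne.image _) ?_
    rintro y ⟨s, hs, rfl⟩
    exact mul_le_mul_of_nonneg_left (le_csSup ⟨B, hB⟩ hs) hc.le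
  · have : sSup S ≤ sSup ((fun r => c * r) '' S) / c := by
      refine csSup_le hne fun s hs => ?_
      rw [le_div_iff₀ hc, mul_comm]
      exact le_csSup hbd' (mem_image_of_mem _ hs)
    calc c * sSup S ≤ c * (sSup ((fun r => c * r) '' S) / c) :=
          mul_le_mul_of_nonneg_left this hc.le
      _ = sSup ((fun r => c * r) '' S) := by field_simp

theorem stmt16 {n d : ℕ}
    (f : EuclideanSpace ℝ (Fin n) → EReal)
    (hproper : ∃ x, f x ≠ ⊤) (hnobot : ∀ x, f x ≠ ⊥)
    (hlsc : LowerSemicontinuous f)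
    (hfconv : ∀ x y : EuclideanSpace ℝ (Fin n), ∀ a b : ℝ, 0 ≤ a → 0 ≤ b → a + b = 1 →
      f (a • x + b • y) ≤ (a : EReal) * f x + (b : EReal) * f y)
    (husc : ∀ a b : EuclideanSpace ℝ (Fin n),
      UpperSemicontinuous (fun s : ℝ => f (a + s • (b - a))))
    (T : EuclideanSpace ℝ (Fin n) →ₗ[ℝ] EuclideanSpace ℝ (Fin d))
    (D : Set (EuclideanSpace ℝ (Fin d))) (hDne : D.Nonempty)
    (hDcl : IsClosed D) (hDconv : Convex ℝ D)
    (xt : EuclideanSpace ℝ (Fin n)) (hmin : ∀ x, f xt ≤ f x)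
    (hxt : T xt ∈ interior D)
    (hfeas : {x | T x ∉ interior D}.Nonempty)
    (hbd : ⊥ < sInf (f '' {x | T x ∉ interior D}))
    (E : Set (EuclideanSpace ℝ (Fin d)))
    (hE : E = {u | ∀ v ∈ D, (inner ℝ u (v - T xt) : ℝ) ≤ 1})
    (h : EuclideanSpace ℝ (Fin n) → ℝ)
    (hh : ∀ x, h x = sSup ((fun u => (inner ℝ u (T x - T xt) : ℝ)) '' E) - 1) :
    sInf (f '' {x | T x ∉ interior D}) = sInf (f '' {x | 0 ≤ h x}) ∧
    sInf (f '' {x | 0 ≤ h x}) = sInf (f '' {x | 0 < h x}) := by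
  -- a ball around T xt inside D
  obtain ⟨r, hr0, hrD⟩ : ∃ r > 0, Metric.ball (T xt) r ⊆ D := by
    obtain ⟨r, hr0, hr⟩ := Metric.mem_nhds_iff.1 (isOpen_interior.mem_nhds hxt)
    exact ⟨r, hr0, hr.trans interior_subset⟩
  have h0E : (0 : EuclideanSpace ℝ (Fin d)) ∈ E := by
    rw [hE]; intro v hv; simp
  -- E is bounded
  have hEnorm : ∀ u ∈ E, ‖u‖ ≤ 2 / r := by
    intro u hu
    rcases eq_or_ne u 0 with rfl | hu0
    · simp; positivity
    · have hun : 0 < ‖u‖ := norm_pos_iff.2 hu0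
      set v : EuclideanSpace ℝ (Fin d) := T xt + (r / 2) • ‖u‖⁻¹ • u with hv
      have hvsub : v - T xt = (r / 2) • ‖u‖⁻¹ • u := add_sub_cancel_left _ _
      have hvD : v ∈ D := by
        apply hrD
        have hnorm : ‖v - T xt‖ = r / 2 := by
          rw [hvsub, norm_smul, norm_smul, norm_inv, norm_norm,
            inv_mul_cancel₀ hun.ne', mul_one, Real.norm_eq_abs, abs_of_pos (by linarith)]
        rw [Metric.mem_ball, dist_eq_norm, hnorm]
        linarith
      have := (hE ▸ hu) v hvD
      have hinner : (inner ℝ u (v - T xt) : ℝ) = (r / 2) * ‖u‖ := by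
        rw [hvsub, real_inner_smul_right, real_inner_smul_right,
          real_inner_self_eq_norm_sq, sq, inv_mul_cancel_left₀ hun.ne']
      rw [hinner] at this
      rw [le_div_iff₀ hr0]
      nlinarith
  have hSne : ∀ w : EuclideanSpace ℝ (Fin d),
      ((fun u => (inner ℝ u w : ℝ)) '' E).Nonempty := fun w => ⟨_, mem_image_of_mem _ h0E⟩
  have hSbdd : ∀ w : EuclideanSpace ℝ (Fin d),
      BddAbove ((fun u => (inner ℝ u w : ℝ)) '' E) := by
    intro w
    refine ⟨(2 / r) * ‖w‖, ?_⟩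
    rintro y ⟨u, hu, rfl⟩
    calc (inner ℝ u w : ℝ) ≤ ‖u‖ * ‖w‖ := real_inner_le_norm u w
      _ ≤ (2 / r) * ‖w‖ := mul_le_mul_of_nonneg_right (hEnorm u hu) (norm_nonneg w)
  -- key equivalence
  have key : ∀ x, T x ∉ interior D ↔ 0 ≤ h x := by
    intro x
    constructor
    · intro hx
      obtain ⟨φ, hφ⟩ := geometric_hahn_banach_open_point hDconv.interior isOpen_interior hx
      have hφxt : φ (T xt) < φ (T x) := hφ _ hxt
      have hφD : ∀ v ∈ D, φ v ≤ φ (T x) := by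
        intro v hv
        by_contra hlt
        push_neg at hlt
        set θ : ℝ := (φ (T x) - φ (T xt)) / (φ v - φ (T xt)) with hθ
        have hd : 0 < φ v - φ (T xt) := by linarith
        have hθ0 : 0 ≤ θ := div_nonneg (by linarith) hd.le
        have hθ1 : θ < 1 := (div_lt_one hd).2 (by linarith)
        have hmem : θ • v + (1 - θ) • (T xt) ∈ interior D :=
          hDconv.combo_closure_interior_mem_interior (subset_closure hv) hxt hθ0
            (by linarith) (by ring)
        have := hφ _ hmem
        rw [map_add, map_smul, map_smul] at this
        simp only [smul_eq_mul] at this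
        have hθval : θ * (φ v - φ (T xt)) = φ (T x) - φ (T xt) := by
          rw [hθ]; field_simp
        nlinarith
      set c : ℝ := φ (T x) - φ (T xt) with hc
      have hc0 : 0 < c := by simp [hc]; linarith
      set p := (InnerProductSpace.toDual ℝ (EuclideanSpace ℝ (Fin d))).symm φ with hp
      have hpy : ∀ y, (inner ℝ p y : ℝ) = φ y := fun y =>
        InnerProductSpace.toDual_symm_apply
      set u : EuclideanSpace ℝ (Fin d) := c⁻¹ • p with hu
      have huE : u ∈ E := by
        rw [hE]
        intro v hv
        rw [hu, real_inner_smul_left, hpy, map_sub]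
        rw [inv_mul_le_iff₀ hc0, mul_one, hc]
        linarith [hφD v hv]
      have huval : (inner ℝ u (T x - T xt) : ℝ) = 1 := by
        rw [hu, real_inner_smul_left, hpy, map_sub]
        field_simp [hc]
        exact hc.symm
      have : (1 : ℝ) ≤ sSup ((fun u => (inner ℝ u (T x - T xt) : ℝ)) '' E) := by
        rw [← huval]
        exact le_csSup (hSbdd _) (mem_image_of_mem _ huE)
      rw [hh]
      linarith
    · intro hx
      intro hmem
      -- T x ∈ interior D ⇒ h x < 0
      obtain ⟨t, ht1, htD⟩ : ∃ t > (1 : ℝ), T xt + t • (T x - T xt) ∈ D := by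
        have hcont : Continuous fun t : ℝ => T xt + t • (T x - T xt) :=
          continuous_const.add (continuous_id.smul continuous_const)
        have heq1 : T xt + (1 : ℝ) • (T x - T xt) = T x := by module
        have h1 : T xt + (1 : ℝ) • (T x - T xt) ∈ interior D := by rw [heq1]; exact hmem
        have hev : ∀ᶠ t in nhds (1 : ℝ), T xt + t • (T x - T xt) ∈ interior D := by
          have := (hcont.continuousAt (x := (1 : ℝ))).preimage_mem_nhds
            (isOpen_interior.mem_nhds (by simpa [heq1] using hmem))
          exact Filter.eventually_of_mem this fun t ht => ht
        have hev' : ∀ᶠ t in nhdsWithin (1 : ℝ) (Ioi 1),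
            T xt + t • (T x - T xt) ∈ interior D := hev.filter_mono nhdsWithin_le_nhds
        obtain ⟨t, htD, ht1⟩ := (hev'.and self_mem_nhdsWithin).exists
        exact ⟨t, ht1, interior_subset htD⟩
      have ht0 : 0 < t := by linarith
      have hub : ∀ y ∈ (fun u => (inner ℝ u (T x - T xt) : ℝ)) '' E, y ≤ t⁻¹ := by
        rintro y ⟨u, hu, rfl⟩
        have := (hE ▸ hu) _ htD
        have heq : (inner ℝ u ((T xt + t • (T x - T xt)) - T xt) : ℝ) =
            t * (inner ℝ u (T x - T xt) : ℝ) := by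
          rw [add_sub_cancel_left, real_inner_smul_right]
        rw [heq] at this
        rw [← mul_le_mul_iff_right₀ ht0, mul_inv_cancel₀ ht0.ne']
        linarith
      have : sSup ((fun u => (inner ℝ u (T x - T xt) : ℝ)) '' E) ≤ t⁻¹ :=
        csSup_le (hSne _) hub
      have hti : t⁻¹ < 1 := by
        rw [inv_lt_one_iff₀]; right; exact ht1
      rw [hh] at hx
      linarith
  have hset : {x | T x ∉ interior D} = {x | 0 ≤ h x} := Set.ext fun x => key x
  constructor
  · rw [hset]
  · apply le_antisymm
    · exact sInf_le_sInf (image_mono (f := f) fun x (hx : 0 < h x) => hx.le)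
    · refine le_sInf ?_
      rintro b ⟨x, hx, rfl⟩
      simp only [mem_setOf_eq] at hx
      refine le_of_forall_gt_imp_ge_of_dense fun y hy => ?_
      -- usc along the segment through xt and x, beyond x
      have husc' := husc x (x + (x - xt)) 0
      have hev := husc' y (by simpa using hy)
      have hev' := hev.filter_mono (nhdsWithin_le_nhds (s := Ioi (0 : ℝ)))
      obtain ⟨s, hfs, hs0⟩ := (hev'.and self_mem_nhdsWithin).exists
      set z := x + s • ((x + (x - xt)) - x) with hz
      -- compute h z
      have hTz : T z - T xt = (1 + s) • (T x - T xt) := by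
        simp only [hz, map_add, map_smul, map_sub]
        module
      have himg : (fun u => (inner ℝ u (T z - T xt) : ℝ)) '' E =
          (fun r => (1 + s) * r) '' ((fun u => (inner ℝ u (T x - T xt) : ℝ)) '' E) := by
        rw [image_image]
        apply image_congr
        intro u _
        rw [hTz, real_inner_smul_right]
      have hhz : h z = (1 + s) * (h x + 1) - 1 := by
        rw [hh, himg, csSup_const_mul_image (hSne _) (hSbdd _) (by linarith), hh]
        ring
      have hz0 : 0 < h z := by rw [hhz]; nlinarith
      calc sInf (f '' {x | 0 < h x}) ≤ f z := sInf_le (mem_image_of_mem f hz0)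
        _ ≤ y := le_of_lt hfs
end

section
/- Let f : X → ℝ ∪ {∞} be proper on a real vector space X, T finite nonempty, φ : T → X* and c : T → ℝ with the Slater-type condition: ∃ x̄ ∈ dom f with ⟨φ(t), x̄⟩ > c(t) for all t ∈ T. Assume f is upper semicontinuous on line segments and inf{f(x) | ⟨φ(t),x⟩ ≥ c(t) ∀t} > −∞. Then inf{f(x) | ⟨φ(t), x⟩ > c(t) ∀ t ∈ T} = inf{f(x) | ⟨φ(t), x⟩ ≥ c(t) ∀ t ∈ T}. -/
theorem stmt19 {X : Type*} [AddCommGroup X] [Module ℝ X]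
    {T : Type*} [Fintype T] [Nonempty T]
    (f : X → EReal) (hproper : ∃ x, f x ≠ ⊤) (hnobot : ∀ x, f x ≠ ⊥)
    (hf : ∀ a b : X, UpperSemicontinuous (fun s : ℝ => f (a + s • (b - a))))
    (φ : T → (X →ₗ[ℝ] ℝ)) (c : T → ℝ)
    (hslater : ∃ xb : X, f xb ≠ ⊤ ∧ ∀ t, c t < φ t xb)
    (hbd : ⊥ < sInf (f '' {x | ∀ t, c t ≤ φ t x})) :
    sInf (f '' {x | ∀ t, c t < φ t x}) = sInf (f '' {x | ∀ t, c t ≤ φ t x}) := by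
  obtain ⟨xb, -, hxb⟩ := hslater
  apply le_antisymm
  · -- sInf strict ≤ sInf weak
    apply le_sInf
    rintro b ⟨x, hx, rfl⟩
    refine le_of_not_gt fun hlt => ?_
    have h0 : x + (0:ℝ) • (xb - x) = x := by simp
    have hev := hf x xb 0 (sInf (f '' {x | ∀ t, c t < φ t x}))
      (by show (fun s : ℝ => f (x + s • (xb - x))) 0 < _; rw [show (fun s : ℝ => f (x + s • (xb - x))) 0 = f x by simp]; exact hlt)
    obtain ⟨ε, εpos, hball⟩ := Metric.eventually_nhds_iff.mp hev
    set s : ℝ := min (ε / 2) 1 with hs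
    have hspos : 0 < s := lt_min (by linarith) one_pos
    have hs1 : s ≤ 1 := min_le_right _ _
    have hdist : dist s (0:ℝ) < ε := by
      rw [Real.dist_eq, sub_zero, abs_of_pos hspos]
      calc s ≤ ε / 2 := min_le_left _ _
        _ < ε := by linarith
    have hfs := hball hdist
    have hmem : x + s • (xb - x) ∈ {x | ∀ t, c t < φ t x} := by
      intro t
      have h1 : c t ≤ φ t x := hx t
      have h2 : c t < φ t xb := hxb t
      simp only [map_add, map_smul, map_sub, smul_eq_mul]
      nlinarith
    have : sInf (f '' {x | ∀ t, c t < φ t x}) ≤ f (x + s • (xb - x)) :=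
      sInf_le ⟨_, hmem, rfl⟩
    exact absurd (lt_of_le_of_lt this hfs) (lt_irrefl _)
  · exact sInf_le_sInf (Set.image_mono fun x hx t => le_of_lt (hx t))
end
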